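/- For any indices k < j < i into the Farey sequence F_N, the three pairwise greatest common divisors coincide: gcd(d_{kj}, d_{ki}) = gcd(d_{kj}, d_{ji}) = gcd(d_{ki}, d_{ji}), where d_{pq} = h_q*k_p − h_p*k_q. -/

import Mathlib

/-- The Farey set of order `N`: rationals in `[0,1]` with denominator at most `N`. -/
def farey (N : ℕ) : Set ℚ := {q | 0 ≤ q ∧ q ≤ 1 ∧ q.den ≤ N}

/-- `x` and `y` are consecutive (neighbors) in the Farey sequence `F_N`. -/
def fareyNeighbors (N : ℕ) (x y : ℚ) : Prop :=
  x ∈ farey N ∧ y ∈ farey N ∧ x < y ∧ ∀ z ∈ farey N, ¬(x < z ∧ z < y)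

/-- The Farey sequence `F_N` as an ascending list of rationals. -/
def fareyList (N : ℕ) : List ℚ :=
  ((Finset.range (N + 1)).biUnion fun k =>
    (Finset.range (k + 1)).image fun h : ℕ => (h : ℚ) / (k : ℚ)).sort (· ≤ ·)

/-- The Farey determinants matrix entry `d_{ij} = h_j k_i - h_i k_j` (0-based indices). -/
def dM (N : ℕ) (i j : ℕ) : ℤ :=
  ((fareyList N).getD j 0).num * (((fareyList N).getD i 0).den : ℤ) -
    ((fareyList N).getD i 0).num * (((fareyList N).getD j 0).den : ℤ)

/-- If `e` divides `den * x` and `num * x` for a (reduced) rational, then `e ∣ x`. -/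
lemma rat_coprime_cancel (q : ℚ) (e x : ℤ) (h1 : e ∣ (q.den : ℤ) * x)
    (h2 : e ∣ q.num * x) : e ∣ x := by
  have hc : IsCoprime q.num (q.den : ℤ) := by
    rw [Int.isCoprime_iff_gcd_eq_one]; exact q.reduced
  obtain ⟨u, v, huv⟩ := hc
  have hx : u * (q.num * x) + v * ((q.den : ℤ) * x) = x := by linear_combination x * huv
  calc e ∣ u * (q.num * x) + v * ((q.den : ℤ) * x) :=
        dvd_add (Dvd.dvd.mul_left h2 u) (Dvd.dvd.mul_left h1 v)
    _ = x := hx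

theorem dM_gcd_triple (N : ℕ) (k j i : ℕ) (hkj : k < j) (hji : j < i)
    (hi : i < (fareyList N).length) :
    Int.gcd (dM N k j) (dM N k i) = Int.gcd (dM N k j) (dM N j i) ∧
      Int.gcd (dM N k j) (dM N j i) = Int.gcd (dM N k i) (dM N j i) := by
  set p := (fareyList N).getD k 0 with hp
  set q := (fareyList N).getD j 0 with hq
  set r := (fareyList N).getD i 0 with hr
  set A := dM N k j with hA
  set B := dM N k i with hB
  set C := dM N j i with hC
  have hAe : A = q.num * (p.den : ℤ) - p.num * (q.den : ℤ) := rfl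
  have hBe : B = r.num * (p.den : ℤ) - p.num * (r.den : ℤ) := rfl
  have hCe : C = r.num * (q.den : ℤ) - q.num * (r.den : ℤ) := rfl
  -- key linear identities
  have idBd : (q.den : ℤ) * B = (r.den : ℤ) * A + (p.den : ℤ) * C := by
    rw [hAe, hBe, hCe]; ring
  have idBn : q.num * B = r.num * A + p.num * C := by
    rw [hAe, hBe, hCe]; ring
  -- any common divisor of two of A,B,C divides the third
  have dC : ∀ e : ℤ, e ∣ A → e ∣ B → e ∣ C := fun e ha hb =>
    rat_coprime_cancel p e C
      (by have : (p.den : ℤ) * C = (q.den : ℤ) * B - (r.den : ℤ) * A := by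
            rw [idBd]; ring
          rw [this]; exact dvd_sub (hb.mul_left _) (ha.mul_left _))
      (by have : p.num * C = q.num * B - r.num * A := by rw [idBn]; ring
          rw [this]; exact dvd_sub (hb.mul_left _) (ha.mul_left _))
  have dB : ∀ e : ℤ, e ∣ A → e ∣ C → e ∣ B := fun e ha hc =>
    rat_coprime_cancel q e B
      (by rw [idBd]; exact dvd_add (ha.mul_left _) (hc.mul_left _))
      (by rw [idBn]; exact dvd_add (ha.mul_left _) (hc.mul_left _))
  have dA : ∀ e : ℤ, e ∣ B → e ∣ C → e ∣ A := fun e hb hc =>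
    rat_coprime_cancel r e A
      (by have : (r.den : ℤ) * A = (q.den : ℤ) * B - (p.den : ℤ) * C := by
            rw [idBd]; ring
          rw [this]; exact dvd_sub (hb.mul_left _) (hc.mul_left _))
      (by have : r.num * A = q.num * B - p.num * C := by rw [idBn]; ring
          rw [this]; exact dvd_sub (hb.mul_left _) (hc.mul_left _))
  -- mutual divisibility of the three gcds
  have g1 := Int.gcd_dvd_left (a := A) (b := B)
  have g1' := Int.gcd_dvd_right (a := A) (b := B)
  have g2 := Int.gcd_dvd_left (a := A) (b := C)
  have g2' := Int.gcd_dvd_right (a := A) (b := C)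
  have g3 := Int.gcd_dvd_left (a := B) (b := C)
  have g3' := Int.gcd_dvd_right (a := B) (b := C)
  have d12 : Int.gcd A B ∣ Int.gcd A C := by
    rw [← Int.natCast_dvd_natCast]
    exact Int.dvd_coe_gcd g1 (dC _ g1 g1')
  have d21 : Int.gcd A C ∣ Int.gcd A B := by
    rw [← Int.natCast_dvd_natCast]
    exact Int.dvd_coe_gcd g2 (dB _ g2 g2')
  have d23 : Int.gcd A C ∣ Int.gcd B C := by
    rw [← Int.natCast_dvd_natCast]
    exact Int.dvd_coe_gcd (dB _ g2 g2') g2'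
  have d32 : Int.gcd B C ∣ Int.gcd A C := by
    rw [← Int.natCast_dvd_natCast]
    exact Int.dvd_coe_gcd (dA _ g3 g3') g3'
  exact ⟨Nat.dvd_antisymm d12 d21, Nat.dvd_antisymm d23 d32⟩
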